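/- arXiv:2601.05408 — 2 statements merged into one kernel-verified Lean document; each statement's English description precedes it below -/
import Mathlib

section
/- Let u_i(t) = Σ_{j≠i} p_{ij} sin(ω_{ij} t) and u_j(t) = Σ_{l≠j} p_{jl} sin(ω_{jl} t) be piecewise-sinusoidal controls in ℝ³, where all frequencies ω_{ab} = ω_{ba} > 0 are pairwise distinct across distinct unordered pairs, and T > 0 is a common integer multiple of all periods 2π/ω_{ab}. Then for any fixed r ∈ ℝ³ \ {0} and any k ∈ ℕ, (1/T)·∫_{kT}^{kT+T} f(r, u_i(t), u_j(t)) dt = (1/2)·f(r, p_{ij}, p_{ji}). -/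
noncomputable section

abbrev E3 := EuclideanSpace ℝ (Fin 3)

def dot3 (a b : E3) : ℝ := inner ℝ a b

def cross3 (a b : E3) : E3 :=
  (WithLp.equiv 2 (Fin 3 → ℝ)).symm
    (crossProduct ((WithLp.equiv 2 (Fin 3 → ℝ)) a) ((WithLp.equiv 2 (Fin 3 → ℝ)) b))

def rhat (r : E3) : E3 := ‖r‖⁻¹ • r

def fdip (r u v : E3) : E3 :=
  dot3 v (rhat r) • u + dot3 u (rhat r) • v +
    (dot3 u v - 5 * dot3 u (rhat r) * dot3 v (rhat r)) • rhat r

open Real intervalIntegral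

lemma integral_cos_mul_zero (c T : ℝ) (k : ℕ) (z : ℤ) (hz : c * T = z * (2 * π))
    (hc : c ≠ 0) : ∫ t in (k*T)..(k*T+T), Real.cos (c*t) = 0 := by
  rw [intervalIntegral.integral_comp_mul_left Real.cos hc]
  rw [integral_cos]
  have : c * (k*T+T) = c*(k*T) + z * (2*π) := by rw [← hz]; ring
  rw [this, Real.sin_add_int_mul_two_pi]
  simp

lemma integral_sin_mul_sin (ω₁ ω₂ T : ℝ) (h1 : 0 < ω₁) (h2 : 0 < ω₂)
    (m₁ m₂ : ℕ) (hm1 : ω₁ * T = m₁ * (2*π)) (hm2 : ω₂ * T = m₂ * (2*π)) (k : ℕ) :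
    ∫ t in (k*T)..(k*T+T), Real.sin (ω₁*t) * Real.sin (ω₂*t)
      = if ω₁ = ω₂ then T/2 else 0 := by
  have hpt : ∀ t : ℝ, Real.sin (ω₁*t) * Real.sin (ω₂*t)
      = (Real.cos ((ω₁-ω₂)*t) - Real.cos ((ω₁+ω₂)*t))/2 := by
    intro t
    have e1 : (ω₁-ω₂)*t = ω₁*t - ω₂*t := by ring
    have e2 : (ω₁+ω₂)*t = ω₁*t + ω₂*t := by ring
    rw [e1, e2, Real.cos_sub, Real.cos_add]; ring
  simp only [hpt]
  have i1 : IntervalIntegrable (fun t => Real.cos ((ω₁-ω₂)*t)) MeasureTheory.volume (k*T) (k*T+T) :=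
    (Real.continuous_cos.comp (continuous_const.mul continuous_id)).intervalIntegrable _ _
  have i2 : IntervalIntegrable (fun t => Real.cos ((ω₁+ω₂)*t)) MeasureTheory.volume (k*T) (k*T+T) :=
    (Real.continuous_cos.comp (continuous_const.mul continuous_id)).intervalIntegrable _ _
  rw [intervalIntegral.integral_div, intervalIntegral.integral_sub i1 i2]
  have hsum : ∫ t in (k*T)..(k*T+T), Real.cos ((ω₁+ω₂)*t) = 0 := by
    apply integral_cos_mul_zero _ _ _ ((m₁:ℤ) + m₂)
    · push_cast; rw [add_mul, hm1, hm2]; ring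
    · positivity
  rw [hsum]
  by_cases h : ω₁ = ω₂
  · simp only [h, sub_self, zero_mul, Real.cos_zero, if_pos rfl]
    rw [intervalIntegral.integral_const]; simp
  · rw [if_neg h]
    rw [integral_cos_mul_zero _ _ _ ((m₁:ℤ) - m₂)]
    · ring
    · push_cast; rw [sub_mul, hm1, hm2]; ring
    · exact sub_ne_zero.mpr h

def fdipL (r : E3) : E3 →ₗ[ℝ] E3 →ₗ[ℝ] E3 :=
  LinearMap.mk₂ ℝ (fdip r)
    (fun u₁ u₂ v => by
      simp only [fdip, dot3, inner_add_left, real_inner_smul_left, inner_add_right,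
        real_inner_smul_right]
      module)
    (fun c u v => by
      simp only [fdip, dot3, inner_add_left, real_inner_smul_left, inner_add_right,
        real_inner_smul_right]
      module)
    (fun u v₁ v₂ => by
      simp only [fdip, dot3, inner_add_left, real_inner_smul_left, inner_add_right,
        real_inner_smul_right]
      module)
    (fun c u v => by
      simp only [fdip, dot3, inner_add_left, real_inner_smul_left, inner_add_right,
        real_inner_smul_right]
      module)

theorem averaged_force_decoupling
    (n : ℕ) (i j : Fin n) (hij : i ≠ j)
    (p : Fin n → Fin n → E3) (ω : Fin n → Fin n → ℝ)
    (hωpos : ∀ a b, a ≠ b → 0 < ω a b)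
    (hωsymm : ∀ a b, ω a b = ω b a)
    (hωdistinct : ∀ a b c d, a ≠ b → c ≠ d →
      ({a, b} : Finset (Fin n)) ≠ {c, d} → ω a b ≠ ω c d)
    (T : ℝ) (hT : 0 < T)
    (hper : ∀ a b, a ≠ b → ∃ m : ℕ, 0 < m ∧ T = m * (2 * Real.pi / ω a b))
    (r : E3) (hr : r ≠ 0) (k : ℕ) :
    (1 / T) • (∫ t in (k * T)..(k * T + T),
        fdip r (∑ l ∈ Finset.univ.erase i, Real.sin (ω i l * t) • p i l)
               (∑ l ∈ Finset.univ.erase j, Real.sin (ω j l * t) • p j l)) =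
      (1 / 2 : ℝ) • fdip r (p i j) (p j i) := by
  -- expand bilinearly
  have hexp : ∀ t : ℝ,
      fdip r (∑ l ∈ Finset.univ.erase i, Real.sin (ω i l * t) • p i l)
             (∑ m ∈ Finset.univ.erase j, Real.sin (ω j m * t) • p j m)
      = ∑ l ∈ Finset.univ.erase i, ∑ m ∈ Finset.univ.erase j,
          (Real.sin (ω i l * t) * Real.sin (ω j m * t)) • fdip r (p i l) (p j m) := by
    intro t
    have h0 : ∀ u v : E3, fdip r u v = fdipL r u v := fun _ _ => rfl
    rw [h0, map_sum]
    simp only [map_smul, map_sum, LinearMap.sum_apply, LinearMap.smul_apply,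
      LinearMap.map_smul₂, smul_smul, Finset.smul_sum]
    rw [Finset.sum_comm]
    exact Finset.sum_congr rfl fun l _ => Finset.sum_congr rfl fun m _ => by
      rw [mul_comm, h0]
  simp only [hexp]
  -- continuity / integrability of each term
  have hcont : ∀ (a b : ℝ) (C : E3), Continuous
      (fun t => (Real.sin (a * t) * Real.sin (b * t)) • C) := by
    intro a b C
    exact ((Real.continuous_sin.comp (continuous_const.mul continuous_id)).mul
      (Real.continuous_sin.comp (continuous_const.mul continuous_id))).smul
      continuous_const
  rw [intervalIntegral.integral_finset_sum (fun l _ =>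
    (continuous_finset_sum _ (fun m _ => hcont _ _ _)).intervalIntegrable _ _)]
  have hswap : ∀ l ∈ Finset.univ.erase i,
      (∫ t in (↑k * T)..(↑k * T + T), ∑ m ∈ Finset.univ.erase j,
        (Real.sin (ω i l * t) * Real.sin (ω j m * t)) • fdip r (p i l) (p j m))
      = ∑ m ∈ Finset.univ.erase j,
          (∫ t in (↑k * T)..(↑k * T + T),
            Real.sin (ω i l * t) * Real.sin (ω j m * t)) • fdip r (p i l) (p j m) := by
    intro l _
    rw [intervalIntegral.integral_finset_sum (fun m _ =>
      (hcont _ _ _).intervalIntegrable _ _)]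
    exact Finset.sum_congr rfl (fun m _ => intervalIntegral.integral_smul_const _ _)
  rw [Finset.sum_congr rfl hswap]
  -- the multiple-of-period facts
  have hmul : ∀ a b : Fin n, a ≠ b → ∃ m : ℕ, ω a b * T = m * (2 * Real.pi) := by
    intro a b hab
    obtain ⟨m, _, hm⟩ := hper a b hab
    refine ⟨m, ?_⟩
    rw [hm]
    field_simp
    exact div_self (ne_of_gt (hωpos a b hab))
  -- evaluate each scalar integral
  have hval : ∀ l ∈ Finset.univ.erase i, ∀ m ∈ Finset.univ.erase j,
      (∫ t in (↑k * T)..(↑k * T + T), Real.sin (ω i l * t) * Real.sin (ω j m * t))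
        = if l = j ∧ m = i then T / 2 else 0 := by
    intro l hl m hm
    have hli : l ≠ i := Finset.ne_of_mem_erase hl
    have hmj : m ≠ j := Finset.ne_of_mem_erase hm
    obtain ⟨m₁, hm₁⟩ := hmul i l hli.symm
    obtain ⟨m₂, hm₂⟩ := hmul j m hmj.symm
    rw [integral_sin_mul_sin (ω i l) (ω j m) T (hωpos i l hli.symm) (hωpos j m hmj.symm)
      m₁ m₂ hm₁ hm₂ k]
    by_cases hcase : l = j ∧ m = i
    · rw [if_pos hcase, if_pos]
      obtain ⟨h1, h2⟩ := hcase
      rw [h1, h2, hωsymm i j]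
    · rw [if_neg hcase, if_neg]
      apply hωdistinct i l j m hli.symm hmj.symm
      intro hset
      apply hcase
      have hi : i ∈ ({j, m} : Finset (Fin n)) := by
        rw [← hset]; simp
      have him : i = m := by
        rcases Finset.mem_insert.mp hi with h | h
        · exact absurd h hij
        · simpa using h
      have hj : j ∈ ({i, l} : Finset (Fin n)) := by
        rw [hset]; simp
      have hjl : j = l := by
        rcases Finset.mem_insert.mp hj with h | h
        · exact absurd h.symm hij
        · simpa using h
      exact ⟨hjl.symm, him.symm⟩
  rw [Finset.sum_congr rfl (fun l hl => Finset.sum_congr rfl (fun m hm => by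
    rw [hval l hl m hm]))]
  -- collapse the double sum to the single surviving term
  have hjmem : j ∈ Finset.univ.erase i := Finset.mem_erase.mpr ⟨hij.symm, Finset.mem_univ _⟩
  have himem : i ∈ Finset.univ.erase j := Finset.mem_erase.mpr ⟨hij, Finset.mem_univ _⟩
  rw [Finset.sum_eq_single_of_mem j hjmem (fun l _ hlj => by
    apply Finset.sum_eq_zero
    intro m _
    rw [if_neg (fun h => hlj h.1), zero_smul])]
  rw [Finset.sum_eq_single_of_mem i himem (fun m _ hmi => by
    rw [if_neg (fun h => hmi h.2), zero_smul])]
  rw [if_pos ⟨rfl, rfl⟩, smul_smul]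
  congr 1
  field_simp
end
end

section
/- Define, for r, f* ∈ ℝ³ with r ≠ 0: Φ₁ = √(|r × f*|² + |r|²|f*|²), Φ₂ = (2 − sgn(r·f*)²)Φ₁, g_r = −(sgn(r·f*)/2)·√((|r·f*| + Φ₁)/|r|), g_rf = (1/√2)·√((−|r·f*| + Φ₂)/|r|), h_r = (1/2)·√((|r·f*| + Φ₂)/|r|), h_rf = −(sgn(r·f*)/√2)·√((−|r·f*| + Φ₁)/|r|), and g(r,f*) = (g_r/|r|)r + (g_rf/(|r||r×f*|))((r×f*)×r), h(r,f*) = (h_r/|r|)r + (h_rf/(|r||r×f*|))((r×f*)×r) when r×f* ≠ 0, and g = (g_r/|r|)r, h = (h_r/|r|)r when r×f* = 0. Then f(r, g(r,f*), h(r,f*)) = f*, where f(r,u,v) = (v·r̂)u + (u·r̂)v + [(u·v) − 5(u·r̂)(v·r̂)]r̂, r̂ = r/|r|. -/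
open scoped Classical

noncomputable section

def Phi1 (r c : E3) : ℝ := Real.sqrt (‖cross3 r c‖ ^ 2 + ‖r‖ ^ 2 * ‖c‖ ^ 2)

def Phi2 (r c : E3) : ℝ := (2 - Real.sign (dot3 r c) ^ 2) * Phi1 r c

def gr (r c : E3) : ℝ :=
  -(Real.sign (dot3 r c) / 2) * Real.sqrt ((|dot3 r c| + Phi1 r c) / ‖r‖)

def grf (r c : E3) : ℝ :=
  (1 / Real.sqrt 2) * Real.sqrt ((-|dot3 r c| + Phi2 r c) / ‖r‖)

def hr (r c : E3) : ℝ :=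
  (1 / 2) * Real.sqrt ((|dot3 r c| + Phi2 r c) / ‖r‖)

def hrf (r c : E3) : ℝ :=
  -(Real.sign (dot3 r c) / Real.sqrt 2) * Real.sqrt ((-|dot3 r c| + Phi1 r c) / ‖r‖)

def gvec (r c : E3) : E3 :=
  if cross3 r c ≠ 0 then
    (gr r c / ‖r‖) • r + (grf r c / (‖r‖ * ‖cross3 r c‖)) • cross3 (cross3 r c) r
  else
    (gr r c / ‖r‖) • r

def hvec (r c : E3) : E3 :=
  if cross3 r c ≠ 0 then
    (hr r c / ‖r‖) • r + (hrf r c / (‖r‖ * ‖cross3 r c‖)) • cross3 (cross3 r c) r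
  else
    (hr r c / ‖r‖) • r

/-! ### Auxiliary lemmas -/

lemma aux_sign_mul_abs (d : ℝ) : Real.sign d * |d| = d := by
  rcases lt_trichotomy d 0 with h|h|h
  · rw [Real.sign_of_neg h, abs_of_neg h]; ring
  · simp [h]
  · rw [Real.sign_of_pos h, abs_of_pos h]; ring

lemma aux_key1 (R X d P1 s P2 : ℝ) (hR : 0 < R)
    (hP1 : P1 = Real.sqrt (2*X^2 + d^2)) (hs : s = Real.sign d)
    (hP2 : P2 = (2 - s^2) * P1) :
    (1/Real.sqrt 2) * Real.sqrt ((-|d| + P2)/R) * (-(s/Real.sqrt 2) * Real.sqrt ((-|d| + P1)/R))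
      - 2 * (-(s/2) * Real.sqrt ((|d| + P1)/R) * ((1/2) * Real.sqrt ((|d| + P2)/R))) = d / R := by
  have habs : |d| ≤ P1 := by
    rw [hP1, ← Real.sqrt_sq_eq_abs]
    exact Real.sqrt_le_sqrt (by nlinarith)
  by_cases hd0 : d = 0
  · subst hd0
    simp [hs, Real.sign_zero]
  · have hs2 : s^2 = 1 := by
      rcases Real.sign_apply_eq_of_ne_zero d hd0 with h|h <;> rw [hs, h] <;> norm_num
    have hP2P1 : P2 = P1 := by rw [hP2, hs2]; ring
    rw [hP2P1]
    set A := Real.sqrt ((-|d| + P1)/R) with hA0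
    set B := Real.sqrt ((|d| + P1)/R) with hB0
    have hA : A*A = (-|d| + P1)/R := Real.mul_self_sqrt (by
      apply div_nonneg _ hR.le; linarith)
    have hB : B*B = (|d| + P1)/R := Real.mul_self_sqrt (by
      apply div_nonneg _ hR.le; linarith [abs_nonneg d])
    have h2 : Real.sqrt 2 * Real.sqrt 2 = 2 := Real.mul_self_sqrt (by norm_num)
    have step : (1/Real.sqrt 2) * A * (-(s/Real.sqrt 2) * A)
        - 2 * (-(s/2) * B * ((1/2) * B))
        = -(s * (A*A)) / (Real.sqrt 2 * Real.sqrt 2) + (s/2) * (B*B) := by ring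
    rw [step, hA, hB, h2]
    have hsd : s * |d| = d := by rw [hs]; exact aux_sign_mul_abs d
    field_simp
    linear_combination 2 * hsd

lemma aux_key2 (R X d P1 s P2 : ℝ) (hR : 0 < R) (hX : 0 ≤ X)
    (hP1 : P1 = Real.sqrt (2*X^2 + d^2)) (hs : s = Real.sign d)
    (hP2 : P2 = (2 - s^2) * P1) :
    (1/2) * Real.sqrt ((|d| + P2)/R) * ((1/Real.sqrt 2) * Real.sqrt ((-|d| + P2)/R))
      + -(s/2) * Real.sqrt ((|d| + P1)/R) * (-(s/Real.sqrt 2) * Real.sqrt ((-|d| + P1)/R))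
      = X / R := by
  have hP1nn : 0 ≤ P1 := hP1 ▸ Real.sqrt_nonneg _
  have hP1sq : P1^2 = 2*X^2 + d^2 := by rw [hP1]; exact Real.sq_sqrt (by positivity)
  have habs : |d| ≤ P1 := by
    rw [hP1, ← Real.sqrt_sq_eq_abs]
    exact Real.sqrt_le_sqrt (by nlinarith)
  have h2 : Real.sqrt 2 * Real.sqrt 2 = 2 := Real.mul_self_sqrt (by norm_num)
  have h2ne : Real.sqrt 2 ≠ 0 := by positivity
  by_cases hd0 : d = 0
  · subst hd0
    have hs0 : s = 0 := by rw [hs, Real.sign_zero]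
    have hP2' : P2 = 2 * P1 := by rw [hP2, hs0]; ring
    have hP1' : P1 = Real.sqrt 2 * X := by
      rw [hP1]
      rw [show 2*X^2 + (0:ℝ)^2 = 2 * X^2 by ring, Real.sqrt_mul (by norm_num), Real.sqrt_sq hX]
    have hC : Real.sqrt (P2/R) * Real.sqrt (P2/R) = P2/R :=
      Real.mul_self_sqrt (div_nonneg (by linarith) hR.le)
    simp only [hs0, abs_zero, neg_zero, zero_add, zero_div, zero_mul, mul_zero, add_zero]
    calc (1/2) * Real.sqrt (P2/R) * ((1/Real.sqrt 2) * Real.sqrt (P2/R))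
        = (Real.sqrt (P2/R) * Real.sqrt (P2/R)) / (2 * Real.sqrt 2) := by ring
      _ = X / R := by
          rw [hC, hP2', hP1']
          field_simp
  · have hs2 : s^2 = 1 := by
      rcases Real.sign_apply_eq_of_ne_zero d hd0 with h|h <;> rw [hs, h] <;> norm_num
    have hP2P1 : P2 = P1 := by rw [hP2, hs2]; ring
    rw [hP2P1]
    have hAB : Real.sqrt ((-|d| + P1)/R) * Real.sqrt ((|d| + P1)/R)
        = Real.sqrt 2 * X / R := by
      rw [← Real.sqrt_mul (div_nonneg (by linarith) hR.le)]
      have harg : (-|d| + P1)/R * ((|d| + P1)/R) = (Real.sqrt 2 * X / R)^2 := by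
        have hd2 : |d|^2 = d^2 := sq_abs d
        have h2sq : Real.sqrt 2 ^ 2 = 2 := Real.sq_sqrt (by norm_num)
        field_simp
        linear_combination (hP1sq - hd2) - X^2*h2sq
      rw [harg, Real.sqrt_sq (by positivity)]
    calc (1/2) * Real.sqrt ((|d| + P1)/R) * ((1/Real.sqrt 2) * Real.sqrt ((-|d| + P1)/R))
        + -(s/2) * Real.sqrt ((|d| + P1)/R) * (-(s/Real.sqrt 2) * Real.sqrt ((-|d| + P1)/R))
        = (1 + s^2)/(2*Real.sqrt 2) * (Real.sqrt ((-|d| + P1)/R) * Real.sqrt ((|d| + P1)/R)) := by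
          ring
      _ = X / R := by
          rw [hs2, hAB]
          field_simp
          ring

lemma aux_lagrange (r c : E3) : ‖cross3 r c‖^2 = ‖r‖^2 * ‖c‖^2 - (dot3 r c)^2 := by
  simp only [← real_inner_self_eq_norm_sq]
  simp [dot3, cross3, cross_apply, PiLp.inner_apply, RCLike.inner_apply, Fin.sum_univ_three,
    EuclideanSpace.norm_sq_eq, Real.norm_eq_abs, sq_abs]
  ring

lemma aux_triple (r c : E3) : cross3 (cross3 r c) r = (dot3 r r) • c - (dot3 r c) • r := by
  ext i
  fin_cases i <;>
    simp [dot3, cross3, cross_apply, PiLp.inner_apply, RCLike.inner_apply, Fin.sum_univ_three,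
      EuclideanSpace.norm_sq_eq, Real.norm_eq_abs, sq_abs, PiLp.smul_apply, PiLp.sub_apply,
      smul_eq_mul] <;> ring

lemma aux_combo (r e : E3) (X : ℝ) (hrne : r ≠ 0) (α₁ β₁ α₂ β₂ : ℝ)
    (her : (inner ℝ e r : ℝ) = 0) (hee : (inner ℝ e e : ℝ) = ‖r‖^2 * X^2) :
    fdip r (α₁ • r + β₁ • e) (α₂ • r + β₂ • e)
      = (β₁*β₂*‖r‖*X^2 - 2*α₁*α₂*‖r‖) • r + (‖r‖*(α₂*β₁+α₁*β₂)) • e := by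
  have hR : (0:ℝ) < ‖r‖ := norm_pos_iff.mpr hrne
  have hrr : (inner ℝ r r : ℝ) = ‖r‖^2 := real_inner_self_eq_norm_sq r
  have hre : (inner ℝ r e : ℝ) = 0 := by rw [real_inner_comm]; exact her
  simp only [fdip, dot3, rhat, inner_add_left, inner_add_right, real_inner_smul_left,
    real_inner_smul_right, hrr, hre, her, hee]
  match_scalars <;> field_simp <;> ring

theorem amplitude_allocation_realizes_force (r fstar : E3) (hrne : r ≠ 0) :
    fdip r (gvec r fstar) (hvec r fstar) = fstar := by
  classical
  set c := fstar with hc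
  have hR : (0:ℝ) < ‖r‖ := norm_pos_iff.mpr hrne
  set d := dot3 r c with hd
  set X := ‖cross3 r c‖ with hX
  set e := cross3 (cross3 r c) r with he
  have hXnn : (0:ℝ) ≤ X := norm_nonneg _
  have lag : X^2 = ‖r‖^2 * ‖c‖^2 - d^2 := aux_lagrange r c
  have hrr : dot3 r r = ‖r‖^2 := real_inner_self_eq_norm_sq r
  have tri : e = (‖r‖^2) • c - d • r := by rw [he, aux_triple, hrr]
  have hrc : (inner ℝ r c : ℝ) = d := rfl
  have hcr : (inner ℝ c r : ℝ) = d := by rw [real_inner_comm]; exact hrc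
  have her : (inner ℝ e r : ℝ) = 0 := by
    rw [tri, inner_sub_left, real_inner_smul_left, real_inner_smul_left, hcr,
      real_inner_self_eq_norm_sq]
    ring
  have hee : (inner ℝ e e : ℝ) = ‖r‖^2 * X^2 := by
    rw [tri, inner_sub_left, inner_sub_right, inner_sub_right, real_inner_smul_left,
      real_inner_smul_left, real_inner_smul_left, real_inner_smul_left,
      real_inner_smul_right, real_inner_smul_right, real_inner_smul_right,
      real_inner_smul_right, hcr, real_inner_self_eq_norm_sq,
      real_inner_self_eq_norm_sq, hrc]
    rw [lag]; ring
  have hRne : ‖r‖ ≠ 0 := ne_of_gt hR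
  have hP1 : Phi1 r c = Real.sqrt (2*X^2 + d^2) := by
    rw [Phi1]
    congr 1
    rw [← hX]
    linarith [lag]
  have hS1 : grf r c * hrf r c - 2 * (gr r c * hr r c) = d / ‖r‖ := by
    simp only [grf, hrf, gr, hr, ← hd]
    exact aux_key1 ‖r‖ X d (Phi1 r c) (Real.sign d) (Phi2 r c) hR hP1 rfl
      (by rw [Phi2, ← hd])
  have hS2 : hr r c * grf r c + gr r c * hrf r c = X / ‖r‖ := by
    simp only [grf, hrf, gr, hr, ← hd]
    exact aux_key2 ‖r‖ X d (Phi1 r c) (Real.sign d) (Phi2 r c) hR hXnn hP1 rfl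
      (by rw [Phi2, ← hd])
  rw [eq_div_iff hRne] at hS1 hS2
  by_cases hcc : cross3 r c = 0
  · have hgv : gvec r c = (gr r c / ‖r‖) • r + (0:ℝ) • e := by
      rw [gvec, if_neg (by simpa using hcc)]
      simp
    have hhv : hvec r c = (hr r c / ‖r‖) • r + (0:ℝ) • e := by
      rw [hvec, if_neg (by simpa using hcc)]
      simp
    have hcross0 : cross3 (0:E3) r = 0 := by
      ext i; fin_cases i <;> simp [cross3, cross_apply]
    have he0 : e = 0 := by rw [he, hcc, hcross0]
    have hX0 : X = 0 := by rw [hX, hcc, norm_zero]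
    have hP1d : Phi1 r c = |d| := by
      rw [hP1, hX0, show 2*(0:ℝ)^2 + d^2 = d^2 by ring, Real.sqrt_sq_eq_abs]
    have hhrf0 : hrf r c = 0 := by
      rw [hrf, ← hd, hP1d]
      simp
    have hS1' : -(2 * (gr r c * hr r c)) * ‖r‖ = d := by
      rw [hhrf0, mul_zero, zero_sub] at hS1
      linarith
    have hsc : (‖r‖^2) • c = d • r := by
      have h := tri
      rw [he0] at h
      exact (sub_eq_zero.mp h.symm)
    have hR2ne : (‖r‖^2 : ℝ) ≠ 0 := by positivity
    have hcval : c = (d / ‖r‖^2) • r := by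
      have h2 : ((‖r‖^2)⁻¹ * ‖r‖^2) • c = (‖r‖^2)⁻¹ • (d • r) := by
        rw [mul_smul, hsc]
      rw [inv_mul_cancel₀ hR2ne, one_smul] at h2
      rw [h2, smul_smul, div_eq_inv_mul]
    rw [hgv, hhv, aux_combo r e X hrne _ _ _ _ her hee, he0]
    conv_rhs => rw [hcval]
    match_scalars
    field_simp [hRne]
    linear_combination hS1'
  · have hXne : X ≠ 0 := by rw [hX]; exact norm_ne_zero_iff.mpr hcc
    have hgv : gvec r c = (gr r c / ‖r‖) • r + (grf r c / (‖r‖ * X)) • e := by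
      rw [gvec, if_pos (by simpa using hcc)]
    have hhv : hvec r c = (hr r c / ‖r‖) • r + (hrf r c / (‖r‖ * X)) • e := by
      rw [hvec, if_pos (by simpa using hcc)]
    rw [hgv, hhv, aux_combo r e X hrne _ _ _ _ her hee, tri]
    match_scalars
    · field_simp [hRne]
      apply mul_left_cancel₀ hRne
      linear_combination X*hS1 - d*hS2
    · field_simp [hRne]
      linear_combination hS2
end
end
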